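/- Let A be a C*-algebra and S : A → A an invertible linear map such that both S and S⁻¹ satisfy the Schwarz inequality: S(x)*S(x) ≤ S(x*x) and S⁻¹(x)*S⁻¹(x) ≤ S⁻¹(x*x) for all x ∈ A. Then S is multiplicative on squares: S(x*x) = S(x)*S(x) for all x ∈ A, and hence S(x*y) = S(x)*S(y) for all x, y ∈ A, i.e. S is a *-homomorphism. -/

import Mathlib

/-- An invertible linear map on a C*-algebra such that both it and its inverse satisfy the
Schwarz inequality is a *-homomorphism. -/
theorem invertible_schwarz_map_is_star_hom
    {A : Type*} [NormedRing A] [StarRing A] [CStarRing A] [NormedAlgebra ℂ A] [StarModule ℂ A]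
    [PartialOrder A] [StarOrderedRing A] [CompleteSpace A]
    (S : A ≃ₗ[ℂ] A)
    (hS : ∀ x : A, star (S x) * S x ≤ S (star x * x))
    (hS' : ∀ x : A, star (S.symm x) * S.symm x ≤ S.symm (star x * x)) :
    (∀ x : A, S (star x * x) = star (S x) * S x) ∧
    (∀ x y : A, S (star x * y) = star (S x) * S y) := by
  have hpos : ∀ a : A, 0 ≤ a → 0 ≤ S a := by
    intro a ha
    rw [StarOrderedRing.nonneg_iff] at ha
    induction ha using AddSubmonoid.closure_induction with
    | mem z hz =>
      obtain ⟨s, rfl⟩ := hz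
      exact le_trans (star_mul_self_nonneg (S s)) (hS s)
    | zero => simp
    | add u v _ _ hu hv => rw [map_add]; exact add_nonneg hu hv
  have hmono : ∀ a b : A, a ≤ b → S a ≤ S b := by
    intro a b hab
    have := hpos (b - a) (sub_nonneg.mpr hab)
    rw [map_sub] at this
    exact sub_nonneg.mp this
  have hsq : ∀ x : A, S (star x * x) = star (S x) * S x := by
    intro x
    refine le_antisymm ?_ (hS x)
    have h1 := hS' (S x)
    rw [S.symm_apply_apply] at h1
    have h2 := hmono _ _ h1
    rwa [S.apply_symm_apply] at h2
  refine ⟨hsq, fun x y => ?_⟩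
  have key : ∀ u v : A, star u * v =
      (1/4 : ℂ) • (star (u + v) * (u + v)) - (1/4 : ℂ) • (star (u - v) * (u - v))
      - (Complex.I/4 : ℂ) • (star (u + Complex.I • v) * (u + Complex.I • v))
      + (Complex.I/4 : ℂ) • (star (u - Complex.I • v) * (u - Complex.I • v)) := by
    intro u v
    simp only [star_add, star_sub, star_smul, Complex.star_def, Complex.conj_I,
      add_mul, sub_mul, mul_add, mul_sub, smul_mul_assoc, mul_smul_comm, smul_smul,
      smul_sub, smul_add, neg_smul, neg_mul]
    set_option linter.unnecessarySeqFocus false in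
    match_scalars <;> ring_nf <;> simp [Complex.I_sq] <;> ring
  rw [key x y, key (S x) (S y)]
  simp only [map_add, map_sub, map_smul, hsq]
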